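/- For any set A ⊆ ℝ^m, the separately convex hull of A × A equals the convex hull of A × A, which in turn equals (conv A) × (conv A). -/
import Mathlib


open Set

/-- A set `E ⊆ V × V` is separately convex if for every `t ∈ (0,1)` and all
points of `E` sharing a first or a second component, their convex combination
lies in `E`. -/
def SepConvex {V : Type*} [AddCommGroup V] [Module ℝ V] (E : Set (V × V)) : Prop :=
  ∀ t : ℝ, t ∈ Set.Ioo (0 : ℝ) 1 → ∀ p ∈ E, ∀ q ∈ E, (p.1 = q.1 ∨ p.2 = q.2) →
    t • p + (1 - t) • q ∈ E

/-- The separately convex hull: the smallest separately convex set containing `E`. -/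
def sepConvexHull {V : Type*} [AddCommGroup V] [Module ℝ V]
    (E : Set (V × V)) : Set (V × V) :=
  ⋂₀ {F | SepConvex F ∧ E ⊆ F}

lemma convex_slice {V : Type*} [AddCommGroup V] [Module ℝ V] {S : Set (V × V)}
    (hS : SepConvex S) (a : V) : Convex ℝ {x : V | (x, a) ∈ S} := by
  intro x hx y hy s t hs ht hst
  rcases eq_or_lt_of_le hs with h0 | h0
  · have : t = 1 := by linarith
    simpa [← h0, this] using hy
  rcases eq_or_lt_of_le ht with h1 | h1
  · have : s = 1 := by linarith
    simpa [← h1, this] using hx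
  have ht' : t = 1 - s := by linarith
  have := hS s ⟨h0, by linarith⟩ (x, a) hx (y, a) hy (Or.inr rfl)
  have hcombo : s • a + (1 - s) • a = a := Convex.combo_self (by ring) a
  simpa [Prod.smul_mk, Prod.mk_add_mk, hcombo, ht'] using this

lemma convex_slice2 {V : Type*} [AddCommGroup V] [Module ℝ V] {S : Set (V × V)}
    (hS : SepConvex S) (a : V) : Convex ℝ {y : V | (a, y) ∈ S} := by
  intro x hx y hy s t hs ht hst
  rcases eq_or_lt_of_le hs with h0 | h0
  · have : t = 1 := by linarith
    simpa [← h0, this] using hy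
  rcases eq_or_lt_of_le ht with h1 | h1
  · have : s = 1 := by linarith
    simpa [← h1, this] using hx
  have ht' : t = 1 - s := by linarith
  have := hS s ⟨h0, by linarith⟩ (a, x) hx (a, y) hy (Or.inl rfl)
  have hcombo : s • a + (1 - s) • a = a := Convex.combo_self (by ring) a
  simpa [Prod.smul_mk, Prod.mk_add_mk, hcombo, ht'] using this

theorem stmt2 {m : ℕ} (A : Set (Fin m → ℝ)) :
    sepConvexHull (A ×ˢ A) = convexHull ℝ (A ×ˢ A) ∧
      convexHull ℝ (A ×ˢ A) = (convexHull ℝ A) ×ˢ (convexHull ℝ A) := by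
  have h2 : convexHull ℝ (A ×ˢ A) = (convexHull ℝ A) ×ˢ (convexHull ℝ A) :=
    convexHull_prod A A
  refine ⟨?_, h2⟩
  have hsep : SepConvex (sepConvexHull (A ×ˢ A)) := by
    intro t ht p hp q hq h F hF
    exact hF.1 t ht p (hp F hF) q (hq F hF) h
  have hsub : A ×ˢ A ⊆ sepConvexHull (A ×ˢ A) := fun x hx F hF => hF.2 hx
  apply Set.Subset.antisymm
  · -- sepConvexHull ⊆ convexHull
    apply Set.sInter_subset_of_mem
    refine ⟨?_, subset_convexHull ℝ _⟩
    intro t ht p hp q hq _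
    exact (convex_convexHull ℝ _) hp hq (le_of_lt ht.1) (by linarith [ht.2]) (by ring)
  · rw [h2]
    have step1 : ∀ a ∈ A, ∀ x ∈ convexHull ℝ A, (x, a) ∈ sepConvexHull (A ×ˢ A) := by
      intro a ha
      have := convexHull_min (s := A) (fun x hx => (by exact hsub ⟨hx, ha⟩ :
        x ∈ {x | (x, a) ∈ sepConvexHull (A ×ˢ A)})) (convex_slice hsep a)
      exact fun x hx => this hx
    rintro ⟨x, y⟩ ⟨hx, hy⟩
    have step2 : convexHull ℝ A ⊆ {y | (x, y) ∈ sepConvexHull (A ×ˢ A)} :=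
      convexHull_min (fun a ha => step1 a ha x hx) (convex_slice2 hsep x)
    exact step2 hy
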